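/- Let m ≥ 1, n ≥ 1 and consider the fiber N^{(m|n)}_{(N)} over the composition (N) (motif all ones): it counts sequences s_1,...,s_N in {1,...,m+n} such that for each i, either s_i < s_{i+1} or s_i = s_{i+1} ∈ {m+1,...,m+n}. This count equals Σ_{j=0}^{min(m,N)} C(m,j) · C(N-j+n-1, N-j). -/

import Mathlib

open Finset

/-- The motif (binary sequence of length `N - 1`) associated to a composition
`(k_1, …, k_r)` of `N`: blocks of `k_i - 1` ones separated by single zeros. -/
def motifList {N : ℕ} (c : Composition N) : List Bool :=
  List.intercalate [false] (c.blocks.map fun k => List.replicate (k - 1) true)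

/-- The index `i` viewed in `Fin N` (position of `s_i`). -/
def prevIdx {N : ℕ} (i : Fin (N - 1)) : Fin N :=
  ⟨i.val, by have := i.isLt; omega⟩

/-- The index `i + 1` viewed in `Fin N` (position of `s_{i+1}`). -/
def nextIdx {N : ℕ} (i : Fin (N - 1)) : Fin N :=
  ⟨i.val + 1, by have := i.isLt; omega⟩

/-- `H^{(m|n)}(s, s')`: `0` if `s < s'` or `s = s'` is fermionic (0-based value `≥ m`),
and `1` if `s > s'` or `s = s'` is bosonic (0-based value `< m`).
Spin states are elements of `Fin k` (with `k = m + n`), the 0-based version of `{1, …, m+n}`: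
bosonic states have value `< m`, fermionic states have value `≥ m`. -/
def Hvertex (m : ℕ) {k : ℕ} (s s' : Fin k) : ℕ :=
  if s < s' ∨ (s = s' ∧ m ≤ s.val) then 0 else 1

/-- The motif `δ` of a spin path configuration: `δ_i = 1` iff `s_i < s_{i+1}` or
`s_i = s_{i+1}` is fermionic, i.e. `δ_i = 1 - H^{(m|n)}(s_i, s_{i+1})`. -/
def spinMotif (m : ℕ) {N k : ℕ} (s : Fin N → Fin k) (i : Fin (N - 1)) : Bool :=
  decide (s (prevIdx i) < s (nextIdx i) ∨
    (s (prevIdx i) = s (nextIdx i) ∧ m ≤ (s (prevIdx i)).val))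

/-- The energy `E^{(m|n)}(s) = ∑_{j=1}^{N-1} ℰ_N(j) H^{(m|n)}(s_j, s_{j+1})` of a spin
path configuration. -/
noncomputable def energy (m : ℕ) {N k : ℕ} (ℰ : ℕ → ℝ) (s : Fin N → Fin k) : ℝ :=
  ∑ i : Fin (N - 1), ℰ (i.val + 1) * (Hvertex m (s (prevIdx i)) (s (nextIdx i)) : ℝ)

/-- The vertex model partition function `V^{(m|n)}(q) = ∑_s q^{E^{(m|n)}(s)}`. -/
noncomputable def V (m n N : ℕ) (ℰ : ℕ → ℝ) (q : ℝ) : ℝ :=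
  ∑ s : Fin N → Fin (m + n), q ^ (energy m ℰ s)

/-- The number of spin path configurations whose motif is the motif of the
composition `c`, i.e. the size of the fiber `F^{(m|n)}_c`. -/
def fiberCard (m n N : ℕ) (c : Composition N) : ℕ :=
  (Finset.univ.filter fun s : Fin N → Fin (m + n) =>
    ∀ i : Fin (N - 1), spinMotif m s i = (motifList c).getD i.val true).card

lemma strictMono_of_step {α : Type*} [Preorder α] {k : ℕ} (f : Fin k → α)
    (h : ∀ x : ℕ, (hx : x + 1 < k) → f ⟨x, by omega⟩ < f ⟨x + 1, hx⟩) : StrictMono f := by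
  have key : ∀ d (x : ℕ) (hx : x + d < k), 0 < d → f ⟨x, by omega⟩ < f ⟨x + d, hx⟩ := by
    intro d
    induction d with
    | zero => omega
    | succ d ih =>
      intro x hx _
      rcases Nat.eq_zero_or_pos d with hd | hd
      · subst hd; exact h x (by omega)
      · exact lt_trans (ih x (by omega) hd) (h (x + d) (by omega))
  intro a b hab
  have hb : b = ⟨a.val + (b.val - a.val), by omega⟩ := by
    apply Fin.ext; simp; omega
  rw [hb]
  have := key (b.val - a.val) a.val (by omega) (Nat.sub_pos_of_lt hab)
  convert this using 2

lemma monotone_of_step {α : Type*} [Preorder α] {k : ℕ} (f : Fin k → α)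
    (h : ∀ x : ℕ, (hx : x + 1 < k) → f ⟨x, by omega⟩ ≤ f ⟨x + 1, hx⟩) : Monotone f := by
  have key : ∀ d (x : ℕ) (hx : x + d < k), f ⟨x, by omega⟩ ≤ f ⟨x + d, hx⟩ := by
    intro d
    induction d with
    | zero => intro x hx; exact le_of_eq rfl
    | succ d ih => intro x hx; exact le_trans (ih x (by omega)) (h (x + d) (by omega))
  intro a b hab
  have hb : b = ⟨a.val + (b.val - a.val), by omega⟩ := by apply Fin.ext; simp; omega
  rw [hb]
  have := key (b.val - a.val) a.val (by omega)
  convert this using 2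

lemma card_strictMonoFin (M k : ℕ) :
    ((univ : Finset (Fin k → Fin M)).filter fun f => StrictMono f).card = M.choose k := by
  have h := Finset.card_powersetCard k (univ : Finset (Fin M))
  rw [Finset.card_univ, Fintype.card_fin] at h
  rw [← h]
  refine Finset.card_bij' (fun f _ => Finset.image f univ)
    (fun A hA => (A.orderEmbOfFin (Finset.mem_powersetCard_univ.mp hA) : Fin k → Fin M))
    ?hi ?hj ?li ?ri
  case hi =>
    intro f hf
    simp only [Finset.mem_filter] at hf
    rw [Finset.mem_powersetCard_univ]
    rw [Finset.card_image_of_injective _ hf.2.injective, Finset.card_univ, Fintype.card_fin]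
  case hj =>
    intro A hA
    simp only [Finset.mem_filter]
    exact ⟨Finset.mem_univ _, (Finset.orderEmbOfFin A _).strictMono⟩
  case li =>
    intro f hf
    simp only [Finset.mem_filter] at hf
    exact (Finset.orderEmbOfFin_unique _ (fun x => Finset.mem_image_of_mem f (mem_univ x))
      hf.2).symm
  case ri =>
    intro A hA
    have hA' := Finset.mem_powersetCard_univ.mp hA
    ext x
    simp only [Finset.mem_image, Finset.mem_univ, true_and]
    constructor
    · rintro ⟨i, rfl⟩; exact Finset.orderEmbOfFin_mem A hA' i
    · intro hx
      refine ⟨(A.orderIsoOfFin hA').symm ⟨x, hx⟩, ?_⟩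
      rw [← Finset.coe_orderIsoOfFin_apply, OrderIso.apply_symm_apply]

-- strict mono into Fin M: spacing lemma
lemma strictMono_spread {M k : ℕ} {h : Fin k → Fin M} (hh : StrictMono h) :
    ∀ (a b : Fin k), a.val ≤ b.val → (h a).val + b.val ≤ (h b).val + a.val := by
  have key : ∀ d (a b : Fin k), b.val = a.val + d → (h a).val + d ≤ (h b).val := by
    intro d
    induction d with
    | zero =>
      intro a b hb
      have : a = b := Fin.ext (by omega)
      subst this; omega
    | succ d ih =>
      intro a b hb
      have hb' : (⟨a.val + d, by omega⟩ : Fin k).val = a.val + d := rfl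
      have h1 := ih a ⟨a.val + d, by omega⟩ rfl
      have h2 : h ⟨a.val + d, by omega⟩ < h b := hh (by rw [Fin.lt_def]; simp; omega)
      rw [Fin.lt_def] at h2
      omega
  intro a b hab
  have := key (b.val - a.val) a b (by omega)
  omega

lemma sub_bound {n k : ℕ} (hn : 1 ≤ n) {h : Fin k → Fin (n + k - 1)}
    (hh : StrictMono h) (a : Fin k) : (h a).val - a.val < n := by
  have hk : 0 < k := a.pos
  have h2 := strictMono_spread hh a ⟨k - 1, Nat.sub_lt hk one_pos⟩
    (by have := a.isLt; simp; omega)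
  have h3 : ((⟨k - 1, Nat.sub_lt hk one_pos⟩ : Fin k)).val = k - 1 := rfl
  have := (h a).isLt
  have := (h ⟨k - 1, Nat.sub_lt hk one_pos⟩).isLt
  have := a.isLt
  omega

lemma card_monotoneFin (n k : ℕ) (hn : 1 ≤ n) :
    ((univ : Finset (Fin k → Fin n)).filter fun g => Monotone g).card
      = (n + k - 1).choose k := by
  rw [← card_strictMonoFin (n + k - 1) k]
  refine Finset.card_bij'
    (fun g _ => fun a : Fin k => (⟨(g a).val + a.val, by
      have := (g a).isLt; have := a.isLt; omega⟩ : Fin (n + k - 1)))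
    (fun h hh => fun a : Fin k => (⟨(h a).val - a.val,
      sub_bound hn (Finset.mem_filter.mp hh).2 a⟩ : Fin n))
    ?hi ?hj ?li ?ri
  case hi =>
    intro g hg
    simp only [Finset.mem_filter] at hg ⊢
    refine ⟨Finset.mem_univ _, fun a b hab => ?_⟩
    rw [Fin.lt_def] at hab ⊢
    have := hg.2 (le_of_lt hab)
    rw [Fin.le_def] at this
    simp only
    omega
  case hj =>
    intro h hh
    simp only [Finset.mem_filter] at hh ⊢
    refine ⟨Finset.mem_univ _, fun a b hab => ?_⟩
    rw [Fin.le_def] at hab ⊢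
    have := strictMono_spread hh.2 a b hab
    simp only
    omega
  case li =>
    intro g hg
    funext a
    apply Fin.ext
    simp
  case ri =>
    intro h hh
    simp only [Finset.mem_filter] at hh
    funext a
    apply Fin.ext
    have h1 := strictMono_spread hh.2 ⟨0, a.pos⟩ a (by simp)
    have hc : ((⟨0, a.pos⟩ : Fin k)).val = 0 := rfl
    simp only
    omega

lemma valid_step {m N k' : ℕ} {s : Fin N → Fin k'}
    (hv : ∀ i : Fin (N - 1), spinMotif m s i = true) (x : ℕ) (hx : x + 1 < N) :
    s ⟨x, by omega⟩ < s ⟨x + 1, hx⟩ ∨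
      (s ⟨x, by omega⟩ = s ⟨x + 1, hx⟩ ∧ m ≤ (s ⟨x, by omega⟩).val) :=
  of_decide_eq_true (hv ⟨x, by omega⟩)

lemma valid_mono {m N k' : ℕ} {s : Fin N → Fin k'}
    (hv : ∀ i : Fin (N - 1), spinMotif m s i = true) : Monotone s := by
  apply monotone_of_step
  intro x hx
  rcases valid_step hv x hx with h | h
  · exact le_of_lt h
  · exact le_of_eq h.1

lemma card_filter_val_lt (N t : ℕ) (ht : t ≤ N) :
    ((univ : Finset (Fin N)).filter fun i => i.val < t).card = t := by
  have he : ((univ : Finset (Fin N)).filter fun i => i.val < t)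
      = (Finset.range t).attachFin (fun x hx => lt_of_lt_of_le (mem_range.mp hx) ht) := by
    ext i
    simp [Finset.mem_attachFin, Finset.mem_range]
  rw [he, Finset.card_attachFin, Finset.card_range]

lemma bos_iff {m n N j : ℕ} (s : Fin N → Fin (m + n))
    (hv : ∀ i : Fin (N - 1), spinMotif m s i = true)
    (hcard : ((univ : Finset (Fin N)).filter fun i => (s i).val < m).card = j)
    (i : Fin N) : (s i).val < m ↔ i.val < j := by
  have hmono := valid_mono hv
  have hdown : ∀ i1 i2 : Fin N, i1 ≤ i2 → (s i2).val < m → (s i1).val < m := by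
    intro i1 i2 h12 h2
    have := hmono h12
    rw [Fin.le_def] at this
    omega
  constructor
  · intro hb
    by_contra hc
    push_neg at hc
    have hsub : ((univ : Finset (Fin N)).filter fun i' => i'.val < i.val + 1)
        ⊆ (univ : Finset (Fin N)).filter fun i' => (s i').val < m := by
      intro i' hi'
      simp only [Finset.mem_filter, Finset.mem_univ, true_and] at hi' ⊢
      exact hdown i' i (by rw [Fin.le_def]; omega) hb
    have hle := Finset.card_le_card hsub
    rw [hcard, card_filter_val_lt N (i.val + 1) i.isLt] at hle
    omega
  · intro hij
    by_contra hc
    push_neg at hc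
    have hsub : ((univ : Finset (Fin N)).filter fun i' => (s i').val < m)
        ⊆ (univ : Finset (Fin N)).filter fun i' => i'.val < i.val := by
      intro i' hi'
      simp only [Finset.mem_filter, Finset.mem_univ, true_and] at hi' ⊢
      by_contra hge
      push_neg at hge
      have := hdown i i' (by rw [Fin.le_def]; omega) hi'
      omega
    have hle := Finset.card_le_card hsub
    rw [hcard, card_filter_val_lt N i.val (le_of_lt i.isLt)] at hle
    omega


def bwd (m n N j : ℕ) (fg : (Fin j → Fin m) × (Fin (N - j) → Fin n)) : Fin N → Fin (m + n) :=
  fun i =>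
    if h : i.val < j then
      ⟨(fg.1 ⟨i.val, h⟩).val, by have := (fg.1 ⟨i.val, h⟩).isLt; omega⟩
    else
      ⟨m + (fg.2 ⟨i.val - j, by have := i.isLt; omega⟩).val, by
        have := (fg.2 ⟨i.val - j, by have := i.isLt; omega⟩).isLt; omega⟩

lemma bwd_val_pos (m n N j : ℕ) (fg : (Fin j → Fin m) × (Fin (N - j) → Fin n))
    (i : Fin N) (h : i.val < j) :
    (bwd m n N j fg i).val = (fg.1 ⟨i.val, h⟩).val := by
  simp only [bwd]
  rw [dif_pos h]

lemma bwd_val_neg (m n N j : ℕ) (fg : (Fin j → Fin m) × (Fin (N - j) → Fin n))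
    (i : Fin N) (h : ¬ i.val < j) :
    (bwd m n N j fg i).val = m + (fg.2 ⟨i.val - j, by have := i.isLt; omega⟩).val := by
  simp only [bwd]
  rw [dif_neg h]

def fwd (m n N j : ℕ) (hjN : j ≤ N) (s : Fin N → Fin (m + n))
    (hbos : ∀ i : Fin N, (s i).val < m ↔ i.val < j) :
    (Fin j → Fin m) × (Fin (N - j) → Fin n) :=
  (fun a => ⟨(s ⟨a.val, lt_of_lt_of_le a.isLt hjN⟩).val,
      (hbos ⟨a.val, lt_of_lt_of_le a.isLt hjN⟩).mpr a.isLt⟩,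
   fun b => ⟨(s ⟨j + b.val, by have := b.isLt; omega⟩).val - m, by
      have h1 := (hbos ⟨j + b.val, by have := b.isLt; omega⟩).not
      simp only [not_lt] at h1
      have h2 := h1.mpr (Nat.le_add_right j b.val)
      have := (s ⟨j + b.val, by have := b.isLt; omega⟩).isLt
      omega⟩)

lemma perj (m n N j : ℕ) (hn : 1 ≤ n) (hjN : j ≤ N) :
    ((univ : Finset (Fin N → Fin (m + n))).filter fun s =>
        (∀ i : Fin (N - 1), spinMotif m s i = true) ∧
        ((univ : Finset (Fin N)).filter fun i => (s i).val < m).card = j).card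
      = m.choose j * (N - j + n - 1).choose (N - j) := by
  have hcard : (((univ : Finset (Fin j → Fin m)).filter fun f => StrictMono f) ×ˢ
      ((univ : Finset (Fin (N - j) → Fin n)).filter fun g => Monotone g)).card
      = m.choose j * (N - j + n - 1).choose (N - j) := by
    rw [Finset.card_product, card_strictMonoFin, card_monotoneFin n (N - j) hn,
      Nat.add_comm n (N - j)]
  rw [← hcard]
  refine Finset.card_bij'
    (fun s hs => fwd m n N j hjN s
      (fun i => bos_iff s (Finset.mem_filter.mp hs).2.1 (Finset.mem_filter.mp hs).2.2 i))
    (fun fg _ => bwd m n N j fg)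
    ?hi ?hj ?li ?ri
  case hi =>
    intro s hs
    have h := Finset.mem_filter.mp hs
    have hbos := fun i => bos_iff s h.2.1 h.2.2 i
    rw [Finset.mem_product]
    constructor
    · simp only [Finset.mem_filter, Finset.mem_univ, true_and, fwd]
      apply strictMono_of_step
      intro x hx
      have hxN : x + 1 < N := by omega
      rw [Fin.lt_def]
      show (s ⟨x, by omega⟩).val < (s ⟨x + 1, hxN⟩).val
      rcases valid_step h.2.1 x hxN with hlt | ⟨heq, hfer⟩
      · rw [Fin.lt_def] at hlt
        exact hlt
      · exfalso
        have hb := (hbos ⟨x, by omega⟩).mpr (show (⟨x, by omega⟩ : Fin N).val < j by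
          show x < j; omega)
        omega
    · simp only [Finset.mem_filter, Finset.mem_univ, true_and, fwd]
      apply monotone_of_step
      intro x hx
      have hxN : j + x + 1 < N := by omega
      rw [Fin.le_def]
      show (s ⟨j + x, by omega⟩).val - m ≤ (s ⟨j + x + 1, hxN⟩).val - m
      rcases valid_step h.2.1 (j + x) hxN with hlt | ⟨heq, hfer⟩
      · rw [Fin.lt_def] at hlt
        omega
      · rw [Fin.ext_iff] at heq
        omega
  case hj =>
    intro fg hfg
    rw [Finset.mem_product] at hfg
    obtain ⟨hf, hg⟩ := hfg
    simp only [Finset.mem_filter, Finset.mem_univ, true_and] at hf hg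
    simp only [Finset.mem_filter, Finset.mem_univ, true_and]
    constructor
    · intro i
      apply decide_eq_true
      simp only [prevIdx, nextIdx]
      have hi1 : i.val + 1 < N := by have := i.isLt; omega
      by_cases h2 : i.val + 1 < j
      · have h1 : i.val < j := by omega
        left
        rw [Fin.lt_def, bwd_val_pos m n N j fg _ h1, bwd_val_pos m n N j fg _ h2]
        have := hf (show (⟨i.val, h1⟩ : Fin j) < ⟨i.val + 1, h2⟩ from
          Fin.mk_lt_mk.mpr (Nat.lt_succ_self _))
        rw [Fin.lt_def] at this
        exact this
      · by_cases h1 : i.val < j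
        · left
          rw [Fin.lt_def, bwd_val_pos m n N j fg _ h1, bwd_val_neg m n N j fg _ h2]
          have := (fg.1 ⟨i.val, h1⟩).isLt
          omega
        · have h2' : ¬ i.val + 1 < j := by omega
          have hv1 := bwd_val_neg m n N j fg ⟨i.val, by omega⟩ h1
          have hv2 := bwd_val_neg m n N j fg ⟨i.val + 1, hi1⟩ h2'
          have hmle := hg (show (⟨i.val - j, by omega⟩ : Fin (N - j)) ≤
              ⟨i.val + 1 - j, by omega⟩ from Fin.mk_le_mk.mpr (by omega))
          rw [Fin.le_def] at hmle
          have hmle' : (fg.2 ⟨(⟨i.val, by omega⟩ : Fin N).val - j, by omega⟩).val ≤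
              (fg.2 ⟨(⟨i.val + 1, hi1⟩ : Fin N).val - j, by omega⟩).val := hmle
          rcases Nat.lt_or_ge (bwd m n N j fg ⟨i.val, by omega⟩).val
              (bwd m n N j fg ⟨i.val + 1, hi1⟩).val with hlt | hge
          · left
            rw [Fin.lt_def]
            exact hlt
          · right
            constructor
            · apply Fin.ext
              omega
            · rw [hv1]
              exact Nat.le_add_right m _
    · have he : ((univ : Finset (Fin N)).filter fun i => (bwd m n N j fg i).val < m)
          = (univ : Finset (Fin N)).filter fun i => i.val < j := by
        apply Finset.filter_congr
        intro i _

        by_cases h1 : i.val < j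
        · rw [bwd_val_pos m n N j fg i h1]
          exact ⟨fun _ => h1, fun _ => (fg.1 ⟨i.val, h1⟩).isLt⟩
        · rw [bwd_val_neg m n N j fg i h1]
          constructor
          · intro hh
            omega
          · intro hh
            exact absurd hh h1
      rw [he, card_filter_val_lt N j hjN]
  case li =>
    intro s hs
    have h := Finset.mem_filter.mp hs
    have hbos := fun i => bos_iff s h.2.1 h.2.2 i
    funext i
    apply Fin.ext
    by_cases h1 : i.val < j
    · rw [bwd_val_pos m n N j _ i h1]
      show (s ⟨i.val, by omega⟩).val = (s i).val
      congr 1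
    · rw [bwd_val_neg m n N j _ i h1]
      show m + ((s ⟨j + (i.val - j), by have := i.isLt; omega⟩).val - m) = (s i).val
      have hidx : (⟨j + (i.val - j), by have := i.isLt; omega⟩ : Fin N) = i := by
        apply Fin.ext
        show j + (i.val - j) = i.val
        omega
      rw [hidx]
      have hge : m ≤ (s i).val := by
        have := (hbos i).not
        simp only [not_lt] at this
        exact this.mpr (by omega)
      omega
  case ri =>
    intro fg hfg
    apply Prod.ext
    · funext a
      apply Fin.ext
      show (bwd m n N j fg ⟨a.val, lt_of_lt_of_le a.isLt hjN⟩).val = (fg.1 a).val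
      rw [bwd_val_pos m n N j fg _ a.isLt]
    · funext b
      apply Fin.ext
      show (bwd m n N j fg ⟨j + b.val, by have := b.isLt; omega⟩).val - m = (fg.2 b).val
      rw [bwd_val_neg m n N j fg _ (by show ¬ j + b.val < j; omega)]
      have hidx : ((⟨(⟨j + b.val, by have := b.isLt; omega⟩ : Fin N).val - j,
          by have := b.isLt; omega⟩ : Fin (N - j))) = b := by
        apply Fin.ext
        show j + b.val - j = b.val
        omega
      rw [hidx]
      omega

/-- for `m, n ≥ 1`, the fiber over the composition `(N)` (motif all
ones: at every step strictly increase or stay constant at a fermionic value) has size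
`∑_{j=0}^{min(m,N)} C(m,j) · C(N-j+n-1, N-j)`. -/
theorem supersymmetric_all_ones_fiber_card (m n N : ℕ) (hm : 1 ≤ m) (hn : 1 ≤ n)
    (hN : 1 ≤ N) :
    ((Finset.univ.filter fun s : Fin N → Fin (m + n) =>
        ∀ i : Fin (N - 1), spinMotif m s i = true).card) =
      ∑ j ∈ Finset.range (min m N + 1),
        m.choose j * (N - j + n - 1).choose (N - j) := by
  have hmem : ∀ s : Fin N → Fin (m + n),
      ((univ : Finset (Fin N)).filter fun i => (s i).val < m).card ∈ Finset.range (N + 1) := by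
    intro s
    rw [Finset.mem_range]
    have h := Finset.card_filter_le (univ : Finset (Fin N)) (fun i => (s i).val < m)
    rw [Finset.card_univ, Fintype.card_fin] at h
    omega
  have hsplit := Finset.card_eq_sum_card_fiberwise
    (s := Finset.univ.filter fun s : Fin N → Fin (m + n) =>
      ∀ i : Fin (N - 1), spinMotif m s i = true)
    (t := Finset.range (N + 1))
    (f := fun s => ((univ : Finset (Fin N)).filter fun i => (s i).val < m).card)
    (fun s _ => hmem s)
  rw [hsplit]
  clear hsplit hmem
  trans ∑ j ∈ Finset.range (N + 1), m.choose j * (N - j + n - 1).choose (N - j)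
  · apply Finset.sum_congr rfl
    intro j hj
    rw [Finset.filter_filter]
    exact perj m n N j hn (by have := Finset.mem_range.mp hj; omega)
  · symm
    apply Finset.sum_subset
    · intro x hx
      rw [Finset.mem_range] at hx ⊢
      omega
    · intro x hx hnx
      rw [Finset.mem_range] at hx hnx
      push_neg at hnx
      have hxm : m < x := by omega
      rw [Nat.choose_eq_zero_of_lt hxm, zero_mul]
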